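/- Let n ≥ 2 and N ≥ 1 be integers. Let ξ_i = (y_i⁺, ζ_i) ∈ ℝ × ℝ^(2n−1) and u_i ∈ ℝ for i = 1,…,N be a dataset, let c : ℝ^(2n) → ℝ be Lipschitz with constant L_c ≥ 0, let ĉ : ℝ^(2n) → ℝ, and let η : [0,∞) → [0,∞) be monotone nondecreasing such that |c(ξ) − ĉ(ξ)| ≤ η(min_{1≤j≤N} ‖ξ_j − ξ‖) for every ξ ∈ ℝ^(2n). Let f : ℝ^(2n−1) × ℝ → ℝ be Lipschitz with constant L_f ≥ 0 (with respect to the Euclidean norm on the product ℝ^(2n−1) × ℝ). Assume u_i = c(ξ_i) and y_i⁺ = f(ζ_i, u_i) for every i. Then for every i ∈ {1,…,N} and every ζ ∈ ℝ^(2n−1), |y_i⁺ − f(ζ, ĉ(y_i⁺, ζ))| ≤ L_f·(‖ζ_i − ζ‖ + γ_u(‖ζ_i − ζ‖)), where γ_u(ε) := L_c·ε + η(ε). -/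

import Mathlib

/-- The identification of `ℝ × ℝ^(2n−1)` with `ℝ^(2n)` carrying the Euclidean (L²) norm:
`pair n y ζ` is the concatenated vector `(y; ζ)`. -/
noncomputable def pair (n : ℕ) (y : ℝ) (ζ : EuclideanSpace ℝ (Fin (2*n-1))) :
    WithLp 2 (ℝ × EuclideanSpace ℝ (Fin (2*n-1))) :=
  (WithLp.equiv 2 (ℝ × EuclideanSpace ℝ (Fin (2*n-1)))).symm (y, ζ)

lemma pair_norm_sub (n : ℕ) (y : ℝ) (ζ ζ' : EuclideanSpace ℝ (Fin (2*n-1))) :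
    ‖pair n y ζ - pair n y ζ'‖ = ‖ζ - ζ'‖ := by
  rw [WithLp.prod_norm_eq_of_L2]
  have h1 : (pair n y ζ - pair n y ζ').fst = 0 := sub_self y
  have h2 : (pair n y ζ - pair n y ζ').snd = ζ - ζ' := rfl
  rw [h1, h2]
  simp [Real.sqrt_sq (norm_nonneg _)]

/-- Proposition 1, inequality (13): output-error bound
`|y_i⁺ − f(ζ, ĉ(y_i⁺, ζ))| ≤ L_f·(‖ζ_i − ζ‖ + γ_u(‖ζ_i − ζ‖))` with
`γ_u(ε) = L_c·ε + η(ε)`.  The map `f` is Lipschitz with constant `L_f` with respect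
to the Euclidean norm on the product `ℝ^(2n−1) × ℝ`. -/
theorem stmt_1 (n N : ℕ) (hn : 2 ≤ n) (hN : 1 ≤ N)
    (yd : Fin N → ℝ) (ζd : Fin N → EuclideanSpace ℝ (Fin (2*n-1)))
    (ud : Fin N → ℝ)
    (c chat : WithLp 2 (ℝ × EuclideanSpace ℝ (Fin (2*n-1))) → ℝ)
    (Lc : ℝ) (hLc0 : 0 ≤ Lc)
    (hLc : ∀ ξ ξ' : WithLp 2 (ℝ × EuclideanSpace ℝ (Fin (2*n-1))),
      |c ξ - c ξ'| ≤ Lc * ‖ξ - ξ'‖)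
    (η : ℝ → ℝ)
    (hη_nonneg : ∀ s, 0 ≤ s → 0 ≤ η s)
    (hη_mono : MonotoneOn η (Set.Ici (0:ℝ)))
    (hbound : ∀ ξ : WithLp 2 (ℝ × EuclideanSpace ℝ (Fin (2*n-1))),
      |c ξ - chat ξ| ≤
        η (Finset.univ.inf' ⟨⟨0, hN⟩, Finset.mem_univ _⟩
            (fun j : Fin N => ‖pair n (yd j) (ζd j) - ξ‖)))
    (f : EuclideanSpace ℝ (Fin (2*n-1)) → ℝ → ℝ)
    (Lf : ℝ) (hLf0 : 0 ≤ Lf)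
    (hLf : ∀ (ζ ζ' : EuclideanSpace ℝ (Fin (2*n-1))) (u u' : ℝ),
      |f ζ u - f ζ' u'| ≤ Lf * Real.sqrt (‖ζ - ζ'‖^2 + |u - u'|^2))
    (hdata_u : ∀ i : Fin N, ud i = c (pair n (yd i) (ζd i)))
    (hdata_y : ∀ i : Fin N, yd i = f (ζd i) (ud i)) :
    ∀ (i : Fin N) (ζ : EuclideanSpace ℝ (Fin (2*n-1))),
      |yd i - f ζ (chat (pair n (yd i) ζ))| ≤
        Lf * (‖ζd i - ζ‖ + (Lc * ‖ζd i - ζ‖ + η ‖ζd i - ζ‖)) := by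
  intro i ζ
  set ξ := pair n (yd i) ζ
  set ξi := pair n (yd i) (ζd i)
  have hdist : ‖ξi - ξ‖ = ‖ζd i - ζ‖ := pair_norm_sub n (yd i) (ζd i) ζ
  have hnn : (0:ℝ) ≤ ‖ζd i - ζ‖ := norm_nonneg _
  -- min ≤ ‖ξi - ξ‖
  have hmin : Finset.univ.inf' ⟨⟨0, hN⟩, Finset.mem_univ _⟩
      (fun j : Fin N => ‖pair n (yd j) (ζd j) - ξ‖) ≤ ‖ζd i - ζ‖ := by
    rw [← hdist]
    exact Finset.inf'_le _ (Finset.mem_univ i)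
  have hmin0 : 0 ≤ Finset.univ.inf' ⟨⟨0, hN⟩, Finset.mem_univ _⟩
      (fun j : Fin N => ‖pair n (yd j) (ζd j) - ξ‖) := by
    obtain ⟨j, -, hj⟩ := Finset.exists_mem_eq_inf' ⟨⟨0, hN⟩, Finset.mem_univ (α := Fin N) _⟩
      (fun j : Fin N => ‖pair n (yd j) (ζd j) - ξ‖)
    rw [hj]; exact norm_nonneg _
  have hu : |ud i - chat ξ| ≤ Lc * ‖ζd i - ζ‖ + η ‖ζd i - ζ‖ := by
    calc |ud i - chat ξ| = |(c ξi - c ξ) + (c ξ - chat ξ)| := by rw [hdata_u i]; change |c ξi - chat ξ| = _; ring_nf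
      _ ≤ |c ξi - c ξ| + |c ξ - chat ξ| := abs_add_le _ _
      _ ≤ Lc * ‖ξi - ξ‖ + η ‖ζd i - ζ‖ := by
          gcongr
          · exact hLc _ _
          · exact (hbound ξ).trans (hη_mono hmin0 hnn hmin)
      _ = Lc * ‖ζd i - ζ‖ + η ‖ζd i - ζ‖ := by rw [hdist]
  have habs : 0 ≤ |ud i - chat ξ| := abs_nonneg _
  calc |yd i - f ζ (chat ξ)| = |f (ζd i) (ud i) - f ζ (chat ξ)| := by rw [← hdata_y i]
    _ ≤ Lf * Real.sqrt (‖ζd i - ζ‖^2 + |ud i - chat ξ|^2) := hLf _ _ _ _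
    _ ≤ Lf * (‖ζd i - ζ‖ + |ud i - chat ξ|) := by
        gcongr
        have := Real.sqrt_le_sqrt (show ‖ζd i - ζ‖^2 + |ud i - chat ξ|^2 ≤
            (‖ζd i - ζ‖ + |ud i - chat ξ|)^2 by nlinarith)
        rwa [Real.sqrt_sq (by positivity)] at this
    _ ≤ Lf * (‖ζd i - ζ‖ + (Lc * ‖ζd i - ζ‖ + η ‖ζd i - ζ‖)) := by
        gcongr
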